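/- Let V̄ = ⊕_{i=1}^m I[b'_i, d'_i] and V' = ⊕_{i=1}^m I[b_i, d'_i] be representations of A_w with b_i ≤ b'_i ≤ min_j(d'_j) for all i, and let ι: V̄ → V' be the morphism whose matrix form is diagonal with (i,i)-entry the canonical inclusion f: I[b'_i,d'_i] → I[b_i,d'_i]. Suppose φ_1: V̄ → V̄ has diagonal matrix form with scalar entries c_1,...,c_m, φ_2: V' → V' is any endomorphism, and ι ∘ φ_1 = φ_2 ∘ ι. Then the matrix form of φ_2 is also diagonal with the same scalar entries c_1,...,c_m. -/

import Mathlib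

open scoped Classical

/-- A persistence module over a poset `P`: a functor `P → vect_K`. -/
structure PersMod (K : Type) [Field K] (P : Type) [Preorder P] : Type 1 where
  V : P → Type
  [acg : ∀ p, AddCommGroup (V p)]
  [mod : ∀ p, Module K (V p)]
  map : ∀ {p q : P}, p ≤ q → (V p →ₗ[K] V q)
  map_id : ∀ p : P, map (le_refl p) = LinearMap.id
  map_comp : ∀ {p q r : P} (hpq : p ≤ q) (hqr : q ≤ r),
    map (le_trans hpq hqr) = (map hqr).comp (map hpq)

attribute [instance] PersMod.acg PersMod.mod

variable {K : Type} [Field K] {P : Type} [Preorder P]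

/-- The space of morphisms (natural transformations) between two persistence modules,
as a submodule of the product of the spaces of linear maps. -/
def HomSpace (M N : PersMod K P) : Submodule K (∀ p, M.V p →ₗ[K] N.V p) where
  carrier := {f | ∀ (p q : P) (h : p ≤ q), (N.map h).comp (f p) = (f q).comp (M.map h)}
  add_mem' := by
    intro f g hf hg p q h
    simp only [Pi.add_apply, LinearMap.comp_add, LinearMap.add_comp, hf p q h, hg p q h]
  zero_mem' := by intro p q h; simp
  smul_mem' := by
    intro c f hf p q h
    simp only [Pi.smul_apply, LinearMap.comp_smul, LinearMap.smul_comp, hf p q h]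

/-- Helper: an element of the zero part of an interval module is zero. -/
lemma seg_val_zero {c : Prop} {inst : Decidable c} (h : ¬c)
    (x : ↥(@ite _ c inst (⊤ : Submodule K K) ⊥)) :
    (x : K) = 0 := by
  obtain ⟨v, hv⟩ := x
  rw [if_neg h] at hv
  exact (Submodule.mem_bot K).mp hv

/-- The interval (segment / rectangle) module `I[a,b]`: value `K` on points `x` with
`a ≤ x ≤ b`, zero elsewhere, identity internal maps. -/
noncomputable def seg (a b : P) : PersMod K P where
  V x := ↥(if a ≤ x ∧ x ≤ b then (⊤ : Submodule K K) else ⊥)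
  map {x y} hxy :=
    { toFun := fun c => ⟨if a ≤ x ∧ y ≤ b then (c : K) else 0, by
        by_cases hc : a ≤ x ∧ y ≤ b
        · rw [if_pos hc, if_pos ⟨le_trans hc.1 hxy, hc.2⟩]; trivial
        · rw [if_neg hc]; exact Submodule.zero_mem _⟩
      map_add' := by
        intro c d; apply Subtype.ext
        by_cases hc : a ≤ x ∧ y ≤ b <;> simp [hc]
      map_smul' := by
        intro r c; apply Subtype.ext
        by_cases hc : a ≤ x ∧ y ≤ b <;> simp [hc] }
  map_id := by
    intro p
    apply LinearMap.ext; intro c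
    apply Subtype.ext
    show (if a ≤ p ∧ p ≤ b then (c : K) else 0) = (c : K)
    by_cases hc : a ≤ p ∧ p ≤ b
    · rw [if_pos hc]
    · rw [seg_val_zero hc c, ite_self]
  map_comp := by
    intro p q r hpq hqr
    apply LinearMap.ext; intro c
    apply Subtype.ext
    show (if a ≤ p ∧ r ≤ b then (c : K) else 0)
      = (if a ≤ q ∧ r ≤ b then (if a ≤ p ∧ q ≤ b then (c : K) else 0) else 0)
    by_cases h1 : a ≤ p ∧ r ≤ b
    · rw [if_pos h1,
        if_pos (show a ≤ q ∧ r ≤ b from ⟨le_trans h1.1 hpq, h1.2⟩),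
        if_pos (show a ≤ p ∧ q ≤ b from ⟨h1.1, le_trans hqr h1.2⟩)]
    · rw [if_neg h1]
      by_cases h2 : a ≤ q ∧ r ≤ b
      · rw [if_pos h2, if_neg (fun h3 => h1 ⟨h3.1, h2.2⟩)]
      · rw [if_neg h2]

/-- The canonical morphism `I[a,b] → I[c,d]`: identity on the intersection, zero elsewhere. -/
noncomputable def canonMap (a b c d : P) (p : P) :
    (seg (K := K) a b).V p →ₗ[K] (seg (K := K) c d).V p where
  toFun v := ⟨if c ≤ p ∧ p ≤ d then v.1 else 0, by
    by_cases hc : c ≤ p ∧ p ≤ d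
    · simp only [if_pos hc]; trivial
    · simp only [if_neg hc]; exact Submodule.zero_mem _⟩
  map_add' := by
    intro v w; apply Subtype.ext
    show (if c ≤ p ∧ p ≤ d then (v + w).1 else 0)
      = (if c ≤ p ∧ p ≤ d then v.1 else 0) + (if c ≤ p ∧ p ≤ d then w.1 else 0)
    by_cases hc : c ≤ p ∧ p ≤ d
    · simp only [if_pos hc]; rfl
    · simp only [if_neg hc]; simp
  map_smul' := by
    intro r v; apply Subtype.ext
    show (if c ≤ p ∧ p ≤ d then (r • v).1 else 0) = r • (if c ≤ p ∧ p ≤ d then v.1 else 0)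
    by_cases hc : c ≤ p ∧ p ≤ d
    · simp only [if_pos hc]; rfl
    · simp only [if_neg hc]; simp

/-- Finite direct sum of persistence modules. -/
noncomputable def dsum {m : ℕ} (M : Fin m → PersMod K P) : PersMod K P where
  V p := ∀ i, (M i).V p
  map h := LinearMap.pi (fun i => ((M i).map h).comp (LinearMap.proj i))
  map_id := by
    intro p
    apply LinearMap.ext; intro v; funext i
    simp [LinearMap.pi, (M i).map_id]
  map_comp := by
    intro p q r h1 h2
    apply LinearMap.ext; intro v; funext i
    simp [LinearMap.pi, (M i).map_comp h1 h2]

/-- Direct sum of two persistence modules. -/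
noncomputable def dsum2 (A B : PersMod K P) : PersMod K P where
  V p := A.V p × B.V p
  map h := (A.map h).prodMap (B.map h)
  map_id := by
    intro p
    show (A.map (le_refl p)).prodMap (B.map (le_refl p)) = LinearMap.id
    rw [A.map_id, B.map_id]
    exact LinearMap.prodMap_id
  map_comp := by
    intro p q r h1 h2
    show (A.map (le_trans h1 h2)).prodMap (B.map (le_trans h1 h2))
      = ((A.map h2).prodMap (B.map h2)).comp ((A.map h1).prodMap (B.map h1))
    rw [A.map_comp h1 h2, B.map_comp h1 h2]
    exact (LinearMap.prodMap_comp _ _ _ _).symm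

/-- Isomorphism of persistence modules. -/
def PersIso (M N : PersMod K P) : Prop :=
  ∃ f ∈ HomSpace M N, ∀ p, Function.Bijective (f p)

/-- The endomorphism algebra of a persistence module. -/
def EndAlg (M : PersMod K P) : Subalgebra K (∀ p, Module.End K (M.V p)) where
  carrier := {f | ∀ (p q : P) (h : p ≤ q), (M.map h).comp (f p) = (f q).comp (M.map h)}
  add_mem' := by
    intro f g hf hg p q h
    simp only [Pi.add_apply, LinearMap.comp_add, LinearMap.add_comp, hf p q h, hg p q h]
  mul_mem' := by
    intro f g hf hg p q h
    show (M.map h).comp ((f p).comp (g p)) = ((f q).comp (g q)).comp (M.map h)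
    rw [← LinearMap.comp_assoc, hf p q h, LinearMap.comp_assoc, hg p q h,
      LinearMap.comp_assoc]
  one_mem' := by intro p q h; rfl
  algebraMap_mem' := by
    intro c p q h
    apply LinearMap.ext; intro v
    simp only [Pi.algebraMap_apply, Module.algebraMap_end_eq_smul_id, LinearMap.comp_apply,
      LinearMap.smul_apply, LinearMap.id_apply, map_smul]

/-- Restriction of a `ℤ×ℤ`-persistence module along a monotone map (a "line"). -/
noncomputable def restrict (L : ℤ → ℤ × ℤ) (hL : Monotone L) (M : PersMod K (ℤ × ℤ)) :
    PersMod K ℤ where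
  V i := M.V (L i)
  map h := M.map (hL h)
  map_id := fun p => M.map_id (L p)
  map_comp := fun h1 h2 => M.map_comp (hL h1) (hL h2)


lemma canonMap_val (a bb cc dd : P) (p : P) (x : (seg (K := K) a bb).V p) :
    (canonMap a bb cc dd p x).1
      = if cc ≤ p ∧ p ≤ dd then x.1 else 0 := rfl

lemma seg_map_val (a bb : P) {p q : P} (h : p ≤ q) (x : (seg (K := K) a bb).V p) :
    ((seg (K := K) a bb).map h x).1
      = if a ≤ p ∧ q ≤ bb then x.1 else 0 := rfl

lemma dsum_map_apply {m : ℕ} (M : Fin m → PersMod K P) {p q : P} (h : p ≤ q)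
    (x : (dsum M).V p) (k : Fin m) :
    (dsum M).map h x k = (M k).map h (x k) := rfl

/-- Propagation of nonzeros through the verticalization morphism
`ι : V̄ = ⊕ I[b'_i, d'_i] → V' = ⊕ I[b_i, d'_i]`: if `ι ∘ φ₁ = φ₂ ∘ ι` with `φ₁` diagonal
with scalars `c_i`, then `φ₂` is diagonal with the same scalars. -/
theorem stmt_7 (K : Type) [Field K] (m : ℕ) (b b' d' : Fin m → ℤ) (c : Fin m → K)
    (hbb' : ∀ i, b i ≤ b' i)
    (hmin : ∀ i j, b' i ≤ d' j)
    (phi2 : ∀ p : ℤ, (dsum (K := K) fun i => seg (b i) (d' i)).V p →ₗ[K]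
      (dsum (K := K) fun i => seg (b i) (d' i)).V p)
    (hphi2 : phi2 ∈ HomSpace (dsum fun i => seg (b i) (d' i)) (dsum fun i => seg (b i) (d' i)))
    (hcomm : ∀ (p : ℤ) (v : ∀ k, (seg (K := K) (b' k) (d' k)).V p) (k : Fin m),
      canonMap (b' k) (d' k) (b k) (d' k) p (c k • v k)
        = phi2 p (fun j => canonMap (b' j) (d' j) (b j) (d' j) p (v j)) k) :
    ∀ (p : ℤ) (i j : Fin m) (v : (seg (K := K) (b i) (d' i)).V p),
      (i ≠ j → phi2 p (Pi.single i v) j = 0) ∧ phi2 p (Pi.single i v) i = c i • v := by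
  intro p i j v
  by_cases hip : b i ≤ p ∧ p ≤ d' i
  · -- main case: the space where `v` lives is nonzero
    have hpq : p ≤ max p (b' i) := le_max_left _ _
    set q := max p (b' i) with hqdef
    have hbq : b' i ≤ q := le_max_right _ _
    have hqi : q ≤ d' i := max_le hip.2 (hmin i i)
    have hbiq : b i ≤ q := le_trans (hbb' i) hbq
    set w : ∀ k, (seg (K := K) (b' k) (d' k)).V q
      := Pi.single i (⟨v.1, by rw [if_pos ⟨hbq, hqi⟩]; trivial⟩ :
          (seg (K := K) (b' i) (d' i)).V q) with hw
    have hA : (fun l => canonMap (b' l) (d' l) (b l) (d' l) q (w l))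
        = (dsum (K := K) fun l => seg (b l) (d' l)).map hpq (Pi.single i v) := by
      funext k
      apply Subtype.ext
      erw [canonMap_val, dsum_map_apply, seg_map_val]
      by_cases hk : k = i
      · subst hk
        erw [hw, Pi.single_eq_same, Pi.single_eq_same]
        simp only [eq_true hbiq, eq_true hqi, eq_true hip.1, true_and, and_self,
          and_true, ite_true]
      · erw [hw, Pi.single_eq_of_ne hk, Pi.single_eq_of_ne hk]
        exact (ite_self (0:K)).trans (ite_self (0:K)).symm
    have hnat : (dsum (K := K) fun l => seg (b l) (d' l)).map hpq
          ((phi2 p) (Pi.single i v))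
        = (phi2 q) ((dsum (K := K) fun l => seg (b l) (d' l)).map hpq (Pi.single i v)) := by
      have h0 := DFunLike.congr_fun (hphi2 p q hpq) (Pi.single i v)
      exact h0
    have key : ∀ k, (((dsum (K := K) fun l => seg (b l) (d' l)).map hpq
          (phi2 p (Pi.single i v))) k).1
        = (canonMap (b' k) (d' k) (b k) (d' k) q (c k • w k)).1 := by
      intro k
      have h1 := hcomm q w k
      rw [hA] at h1
      rw [congrFun hnat k, ← h1]
    constructor
    · intro hij
      have hkey := key j
      rw [dsum_map_apply, seg_map_val, canonMap_val] at hkey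
      have hw0 : w j = 0 := by rw [hw]; exact Pi.single_eq_of_ne (Ne.symm hij) _
      rw [hw0, smul_zero] at hkey
      simp only [ZeroMemClass.coe_zero, ite_self] at hkey
      by_cases hjp : b j ≤ p ∧ p ≤ d' j
      · have hqj : q ≤ d' j := max_le hjp.2 (hmin i j)
        simp only [eq_true hjp.1, eq_true hqj, true_and, and_self, and_true,
          ite_true] at hkey
        exact Subtype.ext (hkey.trans (by split_ifs <;> rfl))
      · exact Subtype.ext (seg_val_zero hjp _)
    · have hkey := key i
      rw [dsum_map_apply, seg_map_val, canonMap_val] at hkey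
      erw [hw, Pi.single_eq_same] at hkey
      simp only [eq_true hip.1, eq_true hqi, eq_true hbiq, true_and, and_self,
        and_true, ite_true] at hkey
      apply Subtype.ext
      rw [hkey]
      rfl
  · -- degenerate case: `v = 0`
    have hv : v = 0 := Subtype.ext (seg_val_zero hip v)
    subst hv
    erw [Pi.single_zero, map_zero]
    exact ⟨fun _ => rfl, by rw [smul_zero]; rfl⟩
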